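/- For every PDL⁻ formula φ: φ is valid on REL (i.e., ⟦φ⟧ˢ = W for every generalized structure S with universal relation U = W×W) if and only if φ is derivable in the Hilbert system H⁻ without the Löb axiom. -/

import Mathlib

/-! Statement 15: soundness and completeness of `H⁻` without the Löb axiom with
respect to REL (structures with the full universal relation). -/

/-- A generalized structure over term variables `A` and formula variables `P`,
with universe `W`. -/
structure GStruct (A P W : Type) where
  U : W → W → Prop
  rel : A → W → W → Prop
  rel_sub : ∀ a x y, rel a x y → U x y
  val : P → W → Prop

/-- The universal relation is a finite linear order (on a nonempty finite universe). -/
def FinLin {A P W : Type} (S : GStruct A P W) : Prop :=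
  Nonempty W ∧ Finite W ∧ (∀ x, S.U x x) ∧
    (∀ x y z, S.U x y → S.U y z → S.U x z) ∧
    (∀ x y, S.U x y → S.U y x → x = y) ∧ (∀ x y, S.U x y ∨ S.U y x)

/-- The universal relation is a finite strict linear order
(on a nonempty finite universe). -/
def SFinLin {A P W : Type} (S : GStruct A P W) : Prop :=
  Nonempty W ∧ Finite W ∧ (∀ x, ¬ S.U x x) ∧
    (∀ x y z, S.U x y → S.U y z → S.U x z) ∧
    (∀ x y, x ≠ y → S.U x y ∨ S.U y x)
mutual
  /-- Formulas of identity-free PDL (PDL⁻). -/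
  inductive MFml (A P : Type) : Type where
    | pv : P → MFml A P
    | imp : MFml A P → MFml A P → MFml A P
    | fls : MFml A P
    | box : MTrm A P → MFml A P → MFml A P
  /-- Terms of identity-free PDL (PDL⁻). -/
  inductive MTrm (A P : Type) : Type where
    | tv : A → MTrm A P
    | comp : MTrm A P → MTrm A P → MTrm A P
    | union : MTrm A P → MTrm A P → MTrm A P
    | plus : MTrm A P → MTrm A P
    | testL : MFml A P → MTrm A P → MTrm A P
    | testR : MTrm A P → MFml A P → MTrm A P
end

namespace MFml
/-- ¬φ := φ → F -/
def neg {A P : Type} (φ : MFml A P) : MFml A P := .imp φ .fls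
/-- T := ¬F -/
def tru {A P : Type} : MFml A P := neg .fls
/-- φ ∨ ψ := ¬φ → ψ -/
def or {A P : Type} (φ ψ : MFml A P) : MFml A P := .imp (neg φ) ψ
/-- φ ∧ ψ := ¬(¬φ ∨ ¬ψ) -/
def and {A P : Type} (φ ψ : MFml A P) : MFml A P := neg (or (neg φ) (neg ψ))
/-- φ ↔ ψ := (φ → ψ) ∧ (ψ → φ) -/
def iff {A P : Type} (φ ψ : MFml A P) : MFml A P := and (.imp φ ψ) (.imp ψ φ)
/-- ⟨e⟩φ := ¬[e]¬φ -/
def dia {A P : Type} (e : MTrm A P) (φ : MFml A P) : MFml A P := neg (.box e (neg φ))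
end MFml

mutual
  /-- Semantics of PDL⁻ formulas on a generalized structure. -/
  def msemF {A P W : Type} (S : GStruct A P W) : MFml A P → W → Prop
    | .pv p, x => S.val p x
    | .imp φ ψ, x => msemF S φ x → msemF S ψ x
    | .fls, _ => False
    | .box e φ, x => ∀ y, msemT S e x y → msemF S φ y
  /-- Semantics of PDL⁻ terms on a generalized structure. -/
  def msemT {A P W : Type} (S : GStruct A P W) : MTrm A P → W → W → Prop
    | .tv a, x, y => S.rel a x y
    | .comp e f, x, z => ∃ y, msemT S e x y ∧ msemT S f y z
    | .union e f, x, y => msemT S e x y ∨ msemT S f x y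
    | .plus e, x, y => Relation.TransGen (fun u v => msemT S e u v) x y
    | .testL ψ e, x, y => msemF S ψ x ∧ msemT S e x y
    | .testR e ψ, x, y => msemT S e x y ∧ msemF S ψ y
end

/-- Propositional formulas over variables `V`. -/
inductive PropF (V : Type) : Type where
  | pv : V → PropF V
  | imp : PropF V → PropF V → PropF V
  | fls : PropF V

/-- Evaluation of a propositional formula under a valuation. -/
def PropF.eval {V : Type} (v : V → Prop) : PropF V → Prop
  | .pv p => v p
  | .imp a b => PropF.eval v a → PropF.eval v b
  | .fls => False

/-- Substitution instance of a propositional formula, substituting PDL⁻ formulas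
for the propositional variables. -/
def PropF.inst {V A P : Type} (σ : V → MFml A P) : PropF V → MFml A P
  | .pv p => σ p
  | .imp a b => .imp (PropF.inst σ a) (PropF.inst σ b)
  | .fls => .fls

/-- The Hilbert system `H⁻` for PDL⁻ *without* the Löb axiom. -/
inductive MProofNL {A P : Type} : MFml A P → Prop where
  /-- modus ponens -/
  | mp {φ ψ : MFml A P} : MProofNL φ → MProofNL (.imp φ ψ) → MProofNL ψ
  /-- necessitation -/
  | nec {φ : MFml A P} (e : MTrm A P) : MProofNL φ → MProofNL (.box e φ)
  /-- (Prop): all substitution-instances of valid propositional formulas -/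
  | prop {V : Type} (χ : PropF V) (hval : ∀ v, PropF.eval v χ) (σ : V → MFml A P) :
      MProofNL (PropF.inst σ χ)
  /-- (;) -/
  | compAx (e f : MTrm A P) (φ : MFml A P) :
      MProofNL (MFml.iff (.box (.comp e f) φ) (.box e (.box f φ)))
  /-- (+) -/
  | unionAx (e f : MTrm A P) (φ : MFml A P) :
      MProofNL (MFml.iff (.box (.union e f) φ) (MFml.and (.box e φ) (.box f φ)))
  /-- (⁺) -/
  | plusAx (e : MTrm A P) (φ : MFml A P) :
      MProofNL (MFml.iff (.box (.plus e) φ) (MFml.and (.box e φ) (.box e (.box (.plus e) φ))))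
  /-- (⁺-Ind) -/
  | plusInd (e : MTrm A P) (φ : MFml A P) :
      MProofNL (.imp (MFml.and (.box e φ) (.box (.plus e) (.imp φ (.box e φ)))) (.box (.plus e) φ))
  /-- (?-L) -/
  | testLAx (ψ : MFml A P) (e : MTrm A P) (φ : MFml A P) :
      MProofNL (MFml.iff (.box (.testL ψ e) φ) (.imp ψ (.box e φ)))
  /-- (?-R) -/
  | testRAx (e : MTrm A P) (ψ φ : MFml A P) :
      MProofNL (MFml.iff (.box (.testR e ψ) φ) (.box e (.imp ψ φ)))
  /-- (K) -/
  | kAx (e : MTrm A P) (φ ψ : MFml A P) :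
      MProofNL (.imp (.box e (.imp φ ψ)) (.imp (.box e φ) (.box e ψ)))

namespace PDLC
set_option linter.unnecessarySeqFocus false
set_option linter.unreachableTactic false
set_option linter.unusedTactic false

open MFml MTrm

variable {A P : Type}

attribute [local instance 50] Classical.propDecidable

noncomputable instance : DecidableEq (MFml A P) := Classical.decEq _

abbrev Pf (φ : MFml A P) : Prop := MProofNL φ

/-- consistency of a single formula -/
def Con (φ : MFml A P) : Prop := ¬ Pf φ.neg

theorem taut' (χ : PropF (MFml A P)) (h : ∀ v : MFml A P → Prop, PropF.eval v χ)
    {φ : MFml A P} (hi : PropF.inst id χ = φ) : Pf φ := hi ▸ MProofNL.prop χ h id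

/-! PropF level connectives -/

def pneg {V : Type} (x : PropF V) : PropF V := .imp x .fls
def por {V : Type} (x y : PropF V) : PropF V := .imp (pneg x) y
def pand {V : Type} (x y : PropF V) : PropF V := pneg (por (pneg x) (pneg y))

@[simp] theorem inst_pneg {V : Type} (σ : V → MFml A P) (x : PropF V) :
    PropF.inst σ (pneg x) = MFml.neg (PropF.inst σ x) := rfl
@[simp] theorem inst_por {V : Type} (σ : V → MFml A P) (x y : PropF V) :
    PropF.inst σ (por x y) = MFml.or (PropF.inst σ x) (PropF.inst σ y) := rfl
@[simp] theorem inst_pand {V : Type} (σ : V → MFml A P) (x y : PropF V) :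
    PropF.inst σ (pand x y) = MFml.and (PropF.inst σ x) (PropF.inst σ y) := rfl
@[simp] theorem inst_pv {V : Type} (σ : V → MFml A P) (a : V) :
    PropF.inst σ (.pv a) = σ a := rfl

@[simp] theorem eval_pneg {V : Type} (v : V → Prop) (x : PropF V) :
    PropF.eval v (pneg x) ↔ ¬ PropF.eval v x := Iff.rfl
@[simp] theorem eval_por {V : Type} (v : V → Prop) (x y : PropF V) :
    PropF.eval v (por x y) ↔ (PropF.eval v x ∨ PropF.eval v y) := by
  simp [por, PropF.eval]; tauto
@[simp] theorem eval_pand {V : Type} (v : V → Prop) (x y : PropF V) :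
    PropF.eval v (pand x y) ↔ (PropF.eval v x ∧ PropF.eval v y) := by
  simp only [pand, por, pneg, PropF.eval]
  tauto
@[simp] theorem eval_imp {V : Type} (v : V → Prop) (x y : PropF V) :
    PropF.eval v (.imp x y) ↔ (PropF.eval v x → PropF.eval v y) := Iff.rfl
@[simp] theorem eval_fls {V : Type} (v : V → Prop) :
    PropF.eval v (.fls : PropF V) ↔ False := Iff.rfl
@[simp] theorem eval_pvv {V : Type} (v : V → Prop) (a : V) :
    PropF.eval v (.pv a) ↔ v a := Iff.rfl

/-! basic derived rules -/

theorem pf_mp {a b : MFml A P} (h : Pf (a.imp b)) (ha : Pf a) : Pf b := MProofNL.mp ha h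

theorem pf_id (a : MFml A P) : Pf (a.imp a) :=
  taut' (.imp (.pv a) (.pv a)) (by intro v; simp) rfl

theorem pf_weak (b : MFml A P) {a : MFml A P} (h : Pf a) : Pf (b.imp a) :=
  pf_mp (taut' (.imp (.pv a) (.imp (.pv b) (.pv a))) (by intro v; simp <;> tauto) rfl) h

theorem pf_trans {a b c : MFml A P} (h1 : Pf (a.imp b)) (h2 : Pf (b.imp c)) : Pf (a.imp c) :=
  pf_mp (pf_mp (taut' (.imp (.imp (.pv a) (.pv b)) (.imp (.imp (.pv b) (.pv c)) (.imp (.pv a) (.pv c))))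
    (by intro v; simp <;> tauto) rfl) h1) h2

theorem pf_and_l (a b : MFml A P) : Pf ((a.and b).imp a) :=
  taut' (.imp (pand (.pv a) (.pv b)) (.pv a)) (by intro v; simp <;> tauto) rfl

theorem pf_and_r (a b : MFml A P) : Pf ((a.and b).imp b) :=
  taut' (.imp (pand (.pv a) (.pv b)) (.pv b)) (by intro v; simp <;> tauto) rfl

theorem pf_and_intro {c a b : MFml A P} (h1 : Pf (c.imp a)) (h2 : Pf (c.imp b)) :
    Pf (c.imp (a.and b)) :=
  pf_mp (pf_mp (taut' (.imp (.imp (.pv c) (.pv a)) (.imp (.imp (.pv c) (.pv b))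
      (.imp (.pv c) (pand (.pv a) (.pv b))))) (by intro v; simp <;> tauto) rfl) h1) h2

theorem pf_or_inl (a b : MFml A P) : Pf (a.imp (a.or b)) :=
  taut' (.imp (.pv a) (por (.pv a) (.pv b))) (by intro v; simp <;> tauto) rfl

theorem pf_or_inr (a b : MFml A P) : Pf (b.imp (a.or b)) :=
  taut' (.imp (.pv b) (por (.pv a) (.pv b))) (by intro v; simp <;> tauto) rfl

theorem pf_or_elim {a b c : MFml A P} (h1 : Pf (a.imp c)) (h2 : Pf (b.imp c)) :
    Pf ((a.or b).imp c) :=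
  pf_mp (pf_mp (taut' (.imp (.imp (.pv a) (.pv c)) (.imp (.imp (.pv b) (.pv c))
      (.imp (por (.pv a) (.pv b)) (.pv c)))) (by intro v; simp <;> tauto) rfl) h1) h2

theorem pf_con_intro {a b : MFml A P} (h1 : Pf (a.imp b)) (h2 : Pf (a.imp b.neg)) : Pf a.neg :=
  pf_mp (pf_mp (taut' (.imp (.imp (.pv a) (.pv b)) (.imp (.imp (.pv a) (pneg (.pv b)))
      (pneg (.pv a)))) (by intro v; simp <;> tauto) rfl) h1) h2

theorem pf_efq_imp {a b c : MFml A P} (h : Pf (a.imp b.neg)) : Pf (a.imp (b.imp c)) :=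
  pf_mp (taut' (.imp (.imp (.pv a) (pneg (.pv b))) (.imp (.pv a) (.imp (.pv b) (.pv c))))
    (by intro v; simp <;> tauto) rfl) h

theorem pf_dne {a : MFml A P} (h : Pf a.neg.neg) : Pf a :=
  pf_mp (taut' (.imp (pneg (pneg (.pv a))) (.pv a)) (by intro v; simp <;> tauto) rfl) h

theorem pf_contrapose {a b : MFml A P} (h : Pf (a.imp b)) : Pf (b.neg.imp a.neg) :=
  pf_mp (taut' (.imp (.imp (.pv a) (.pv b)) (.imp (pneg (.pv b)) (pneg (.pv a))))
    (by intro v; simp <;> tauto) rfl) h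

theorem pf_notand {x y : MFml A P} (h : Pf ((x.and y.neg).neg)) : Pf (x.imp y) :=
  pf_mp (taut' (.imp (pneg (pand (.pv x) (pneg (.pv y)))) (.imp (.pv x) (.pv y)))
    (by intro v; simp <;> tauto) rfl) h

theorem pf_notand2 {u v w : MFml A P} (h1 : Pf (u.imp v)) (h2 : Pf (v.imp w)) :
    Pf ((u.and w.neg).neg) :=
  pf_mp (pf_mp (taut' (.imp (.imp (.pv u) (.pv v)) (.imp (.imp (.pv v) (.pv w))
      (pneg (pand (.pv u) (pneg (.pv w)))))) (by intro vv; simp <;> tauto) rfl) h1) h2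

theorem pf_imp_mp {c a b : MFml A P} (h1 : Pf (c.imp (a.imp b))) (h2 : Pf (c.imp a)) :
    Pf (c.imp b) :=
  pf_mp (pf_mp (taut' (.imp (.imp (.pv c) (.imp (.pv a) (.pv b))) (.imp (.imp (.pv c) (.pv a))
      (.imp (.pv c) (.pv b)))) (by intro v; simp <;> tauto) rfl) h1) h2

theorem pf_iff_l {a b : MFml A P} (h : Pf (a.iff b)) : Pf (a.imp b) :=
  pf_mp (taut' (.imp (pand (.imp (.pv a) (.pv b)) (.imp (.pv b) (.pv a))) (.imp (.pv a) (.pv b)))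
    (by intro v; simp <;> tauto) rfl) h

theorem pf_iff_r {a b : MFml A P} (h : Pf (a.iff b)) : Pf (b.imp a) :=
  pf_mp (taut' (.imp (pand (.imp (.pv a) (.pv b)) (.imp (.pv b) (.pv a))) (.imp (.pv b) (.pv a)))
    (by intro v; simp <;> tauto) rfl) h

theorem pf_and3 {c x y z : MFml A P} (h1 : Pf (c.imp x)) (h2 : Pf y)
    (h3 : Pf ((x.and y).imp z)) : Pf (c.imp z) :=
  pf_imp_mp (pf_weak c h3) (pf_and_intro h1 (pf_weak c h2))

theorem pf_imp_inner_weak {c x : MFml A P} (y : MFml A P) (h : Pf (c.imp x)) :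
    Pf (c.imp (y.imp x)) :=
  pf_mp (taut' (.imp (.imp (.pv c) (.pv x)) (.imp (.pv c) (.imp (.pv y) (.pv x))))
    (by intro v; simp <;> tauto) rfl) h

theorem pf_tru : Pf (MFml.tru : MFml A P) :=
  taut' (pneg .fls) (by intro v; simp) rfl

theorem pf_fls_imp (a : MFml A P) : Pf (MFml.fls.imp a) :=
  taut' (.imp .fls (.pv a)) (by intro v; simp) rfl

theorem pf_imp_of_neg {a : MFml A P} (c : MFml A P) (h : Pf a.neg) : Pf (a.imp c) :=
  pf_mp (taut' (.imp (pneg (.pv a)) (.imp (.pv a) (.pv c))) (by intro v; simp <;> tauto) rfl) h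

theorem pf_split {c ψ : MFml A P} (h1 : Pf (c.and ψ).neg) (h2 : Pf (c.and ψ.neg).neg) :
    Pf c.neg :=
  pf_mp (pf_mp (taut' (.imp (pneg (pand (.pv c) (.pv ψ))) (.imp (pneg (pand (.pv c) (pneg (.pv ψ))))
      (pneg (.pv c)))) (by intro v; simp <;> tauto) rfl) h1) h2

theorem conSplit {c : MFml A P} (ψ : MFml A P) (h : Con c) :
    Con (c.and ψ) ∨ Con (c.and ψ.neg) := by
  by_contra hc
  push_neg at hc
  exact h (pf_split (not_not.mp hc.1) (not_not.mp hc.2))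

theorem conMono {a b : MFml A P} (h : Pf (a.imp b)) (hc : Con a) : Con b :=
  fun hnb => hc (pf_mp (pf_contrapose h) hnb)

/-! modal derived rules -/

theorem boxMono {a b : MFml A P} (e : MTrm A P) (h : Pf (a.imp b)) :
    Pf ((MFml.box e a).imp (.box e b)) :=
  pf_mp (MProofNL.kAx e a b) (MProofNL.nec e h)

theorem boxMP2 {x y z c : MFml A P} (e : MTrm A P) (hd : Pf (x.imp (y.imp z)))
    (h1 : Pf (c.imp (.box e x))) (h2 : Pf (c.imp (.box e y))) : Pf (c.imp (.box e z)) := by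
  have k1 : Pf ((MFml.box e x).imp (.box e (y.imp z))) := boxMono e hd
  have k2 : Pf ((MFml.box e (y.imp z)).imp ((MFml.box e y).imp (.box e z))) :=
    MProofNL.kAx e y z
  exact pf_imp_mp (pf_trans (pf_trans h1 k1) k2) h2

end PDLC

namespace PDLC

variable {A P : Type}

/-! big conjunctions and disjunctions -/

def bigConj (L : List (MFml A P)) : MFml A P := L.foldr MFml.and MFml.tru
def bigDisj (L : List (MFml A P)) : MFml A P := L.foldr MFml.or MFml.fls

@[simp] theorem bigConj_nil : bigConj ([] : List (MFml A P)) = MFml.tru := rfl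
@[simp] theorem bigConj_cons (a : MFml A P) (L : List (MFml A P)) :
    bigConj (a :: L) = a.and (bigConj L) := rfl
@[simp] theorem bigDisj_nil : bigDisj ([] : List (MFml A P)) = MFml.fls := rfl
@[simp] theorem bigDisj_cons (a : MFml A P) (L : List (MFml A P)) :
    bigDisj (a :: L) = a.or (bigDisj L) := rfl

theorem conj_mem {ψ : MFml A P} : ∀ {L : List (MFml A P)}, ψ ∈ L → Pf ((bigConj L).imp ψ)
  | a :: L, h => by
      rcases List.mem_cons.mp h with h | h
      · subst h; exact pf_and_l _ _
      · exact pf_trans (pf_and_r _ _) (conj_mem h)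

theorem conj_intro {c : MFml A P} : ∀ {L : List (MFml A P)},
    (∀ ψ ∈ L, Pf (c.imp ψ)) → Pf (c.imp (bigConj L))
  | [], _ => pf_weak c pf_tru
  | a :: L, h => pf_and_intro (h a (.head _))
      (conj_intro fun ψ hψ => h ψ (.tail _ hψ))

theorem disj_mem {ψ : MFml A P} : ∀ {L : List (MFml A P)}, ψ ∈ L → Pf (ψ.imp (bigDisj L))
  | a :: L, h => by
      rcases List.mem_cons.mp h with h | h
      · subst h; exact pf_or_inl _ _
      · exact pf_trans (disj_mem h) (pf_or_inr _ _)

theorem disj_elim {c : MFml A P} : ∀ {L : List (MFml A P)},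
    (∀ ψ ∈ L, Pf (ψ.imp c)) → Pf ((bigDisj L).imp c)
  | [], _ => pf_fls_imp c
  | a :: L, h => pf_or_elim (h a (.head _)) (disj_elim fun ψ hψ => h ψ (.tail _ hψ))

theorem boxCollect (e : MTrm A P) (c : MFml A P) : ∀ (L : List (MFml A P)),
    (∀ ψ ∈ L, Pf (c.imp (.box e ψ))) → Pf (c.imp (.box e (bigConj L)))
  | [], _ => pf_weak c (MProofNL.nec e pf_tru)
  | a :: L, h => by
      have hL := boxCollect e c L fun ψ hψ => h ψ (.tail _ hψ)
      have ha := h a (.head _)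
      exact boxMP2 e (taut' (.imp (.pv a) (.imp (.pv (bigConj L)) (pand (.pv a) (.pv (bigConj L)))))
        (by intro v; simp; tauto) rfl) ha hL

/-! PropF-level big operations -/

def pbigConj {V : Type} (L : List (PropF V)) : PropF V := L.foldr pand (pneg .fls)
def pbigDisj {V : Type} (L : List (PropF V)) : PropF V := L.foldr por .fls

theorem inst_pbigConj {V : Type} (σ : V → MFml A P) : ∀ (L : List (PropF V)),
    PropF.inst σ (pbigConj L) = bigConj (L.map (PropF.inst σ))
  | [] => rfl
  | a :: L => by
      simp only [pbigConj, List.foldr_cons, List.map_cons, bigConj_cons]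
      rw [← inst_pbigConj σ L]; rfl

theorem inst_pbigDisj {V : Type} (σ : V → MFml A P) : ∀ (L : List (PropF V)),
    PropF.inst σ (pbigDisj L) = bigDisj (L.map (PropF.inst σ))
  | [] => rfl
  | a :: L => by
      simp only [pbigDisj, List.foldr_cons, List.map_cons, bigDisj_cons]
      rw [← inst_pbigDisj σ L]; rfl

theorem eval_pbigConj {V : Type} (v : V → Prop) : ∀ (L : List (PropF V)),
    PropF.eval v (pbigConj L) ↔ ∀ x ∈ L, PropF.eval v x
  | [] => by simp [pbigConj, PropF.eval]
  | a :: L => by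
      simp only [pbigConj, List.foldr_cons] at *
      rw [show (List.foldr pand (pneg .fls) L) = pbigConj L from rfl]
      rw [eval_pand, eval_pbigConj v L]; simp

theorem eval_pbigDisj {V : Type} (v : V → Prop) : ∀ (L : List (PropF V)),
    PropF.eval v (pbigDisj L) ↔ ∃ x ∈ L, PropF.eval v x
  | [] => by simp [pbigDisj, PropF.eval]
  | a :: L => by
      simp only [pbigDisj, List.foldr_cons]
      rw [show (List.foldr por .fls L) = pbigDisj L from rfl]
      rw [eval_por, eval_pbigDisj v L]; simp

end PDLC

namespace PDLC

variable {A P : Type}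

attribute [local instance 50] Classical.propDecidable

/-! semantics simp lemmas -/

section Sem
variable {W : Type} (S : GStruct A P W)

@[simp] theorem msemF_pv (p : P) (x : W) : msemF S (.pv p) x ↔ S.val p x := by
  rw [msemF]
@[simp] theorem msemF_imp (a b : MFml A P) (x : W) :
    msemF S (.imp a b) x ↔ (msemF S a x → msemF S b x) := by rw [msemF]
@[simp] theorem msemF_fls (x : W) : msemF S .fls x ↔ False := by rw [msemF]
@[simp] theorem msemF_box (e : MTrm A P) (a : MFml A P) (x : W) :
    msemF S (.box e a) x ↔ ∀ y, msemT S e x y → msemF S a y := by rw [msemF]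
@[simp] theorem msemT_tv (a : A) (x y : W) : msemT S (.tv a) x y ↔ S.rel a x y := by rw [msemT]
@[simp] theorem msemT_comp (e f : MTrm A P) (x z : W) :
    msemT S (.comp e f) x z ↔ ∃ y, msemT S e x y ∧ msemT S f y z := by rw [msemT]
@[simp] theorem msemT_union (e f : MTrm A P) (x y : W) :
    msemT S (.union e f) x y ↔ (msemT S e x y ∨ msemT S f x y) := by rw [msemT]
@[simp] theorem msemT_plus (e : MTrm A P) (x y : W) :
    msemT S (.plus e) x y ↔ Relation.TransGen (fun u v => msemT S e u v) x y := by rw [msemT]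
@[simp] theorem msemT_testL (ψ : MFml A P) (e : MTrm A P) (x y : W) :
    msemT S (.testL ψ e) x y ↔ (msemF S ψ x ∧ msemT S e x y) := by rw [msemT]
@[simp] theorem msemT_testR (e : MTrm A P) (ψ : MFml A P) (x y : W) :
    msemT S (.testR e ψ) x y ↔ (msemT S e x y ∧ msemF S ψ y) := by rw [msemT]

@[simp] theorem msemF_neg (a : MFml A P) (x : W) :
    msemF S a.neg x ↔ ¬ msemF S a x := by simp [MFml.neg]
@[simp] theorem msemF_or (a b : MFml A P) (x : W) :
    msemF S (a.or b) x ↔ (msemF S a x ∨ msemF S b x) := by simp [MFml.or] <;> tauto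
@[simp] theorem msemF_and (a b : MFml A P) (x : W) :
    msemF S (a.and b) x ↔ (msemF S a x ∧ msemF S b x) := by simp [MFml.and] <;> tauto
@[simp] theorem msemF_iff (a b : MFml A P) (x : W) :
    msemF S (a.iff b) x ↔ ((msemF S a x → msemF S b x) ∧ (msemF S b x → msemF S a x)) := by
  simp [MFml.iff]
@[simp] theorem msemF_tru (x : W) : msemF S MFml.tru x ↔ True := by simp [MFml.tru]

end Sem

/-! atoms -/

noncomputable def litOf (s : Finset (MFml A P)) (ψ : MFml A P) : MFml A P := if ψ ∈ s then ψ else ψ.neg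

noncomputable def atomF (Φ : Finset (MFml A P)) (s : Finset (MFml A P)) : MFml A P :=
  bigConj (Φ.toList.map (litOf s))

def Atom (Φ : Finset (MFml A P)) : Type := {s : Finset (MFml A P) // s ⊆ Φ ∧ Con (atomF Φ s)}

instance (Φ : Finset (MFml A P)) : Finite (Atom Φ) := by
  apply Finite.of_injective
    (fun (X : Atom Φ) => (⟨X.1, Finset.mem_powerset.mpr X.2.1⟩ : ↥(Φ.powerset)))
  intro X Y h
  rcases X with ⟨x, hx⟩
  rcases Y with ⟨y, hy⟩
  simp only [Subtype.mk.injEq] at h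
  exact Subtype.ext h

noncomputable instance (Φ : Finset (MFml A P)) : Fintype (Atom Φ) := Fintype.ofFinite _

theorem mem_imp {Φ s : Finset (MFml A P)} {ψ : MFml A P} (hΦ : ψ ∈ Φ) (hs : ψ ∈ s) :
    Pf ((atomF Φ s).imp ψ) :=
  conj_mem (List.mem_map.2 ⟨ψ, Finset.mem_toList.2 hΦ, by simp [litOf, hs]⟩)

theorem notmem_imp {Φ s : Finset (MFml A P)} {ψ : MFml A P} (hΦ : ψ ∈ Φ) (hs : ψ ∉ s) :
    Pf ((atomF Φ s).imp ψ.neg) :=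
  conj_mem (List.mem_map.2 ⟨ψ, Finset.mem_toList.2 hΦ, by simp [litOf, hs]⟩)

theorem mem_of_prov {Φ : Finset (MFml A P)} (X : Atom Φ) {ψ : MFml A P} (hΦ : ψ ∈ Φ)
    (h : Pf ((atomF Φ X.1).imp ψ)) : ψ ∈ X.1 := by
  by_contra hn
  exact X.2.2 (pf_con_intro h (notmem_imp hΦ hn))

theorem amem_imp {Φ : Finset (MFml A P)} (X : Atom Φ) {ψ : MFml A P} (h : ψ ∈ X.1) :
    Pf ((atomF Φ X.1).imp ψ) := mem_imp (X.2.1 h) h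

theorem mem_of_mem_prov {Φ : Finset (MFml A P)} (X : Atom Φ) {φ ψ : MFml A P}
    (h : φ ∈ X.1) (himp : Pf (φ.imp ψ)) (hΦ : ψ ∈ Φ) : ψ ∈ X.1 :=
  mem_of_prov X hΦ (pf_trans (amem_imp X h) himp)

/-! the Lindenbaum-style extension lemma -/

theorem con_shuffle {c χ : MFml A P} {M : List (MFml A P)}
    (h : Con ((bigConj (c :: M)).and χ)) : Con (bigConj (c :: χ :: M)) := by
  refine conMono ?_ h
  refine conj_intro ?_
  intro ψ hψ
  rcases List.mem_cons.mp hψ with rfl | hψ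
  · exact pf_trans (pf_and_l _ _) (conj_mem (.head _))
  rcases List.mem_cons.mp hψ with rfl | hψ
  · exact pf_and_r _ _
  · exact pf_trans (pf_and_l _ _) (conj_mem (.tail _ hψ))

theorem extend (c : MFml A P) (hc : Con c) : ∀ (L : List (MFml A P)), L.Nodup →
    ∃ s : Finset (MFml A P), s ⊆ L.toFinset ∧ Con (bigConj (c :: L.map (litOf s)))
  | [], _ => by
      refine ⟨∅, by simp, ?_⟩
      simp only [List.map_nil]
      exact conMono (pf_and_intro (pf_id c) (pf_weak c pf_tru)) hc
  | ψ :: L, hnd => by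
      obtain ⟨hψL, hndL⟩ := List.nodup_cons.mp hnd
      obtain ⟨s, hsub, hcon⟩ := extend c hc L hndL
      have hψs : ψ ∉ s := fun h => hψL (List.mem_toFinset.mp (hsub h))
      rcases conSplit ψ hcon with h | h
      · refine ⟨insert ψ s, ?_, ?_⟩
        · intro x hx
          rcases Finset.mem_insert.mp hx with rfl | hx
          · simp
          · simp [List.mem_toFinset.mp (hsub hx)]
        · have hmap : L.map (litOf (insert ψ s)) = L.map (litOf s) := by
            apply List.map_congr_left
            intro x hx
            have : x ≠ ψ := fun hh => hψL (hh ▸ hx)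
            simp [litOf, Finset.mem_insert, this]
          have hlit : litOf (insert ψ s) ψ = ψ := by simp [litOf]
          simpa [hmap, hlit] using con_shuffle h
      · refine ⟨s, fun x hx => by simp [List.mem_toFinset.mp (hsub hx)], ?_⟩
        have hlit : litOf s ψ = ψ.neg := by simp [litOf, hψs]
        simpa [hlit] using con_shuffle h

/-! cover of all atoms -/

theorem cover_all (Φ : Finset (MFml A P)) :
    Pf (bigDisj ((Φ.powerset.toList).map (atomF Φ))) := by
  refine taut' (pbigDisj ((Φ.powerset.toList).map (fun s =>
      pbigConj (Φ.toList.map (fun ψ => if ψ ∈ s then .pv ψ else pneg (.pv ψ)))))) ?_ ?_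
  · intro v
    rw [eval_pbigDisj]
    refine ⟨_, List.mem_map.2 ⟨Φ.filter (fun ψ => v ψ),
      Finset.mem_toList.2 (Finset.mem_powerset.2 (Finset.filter_subset _ _)), rfl⟩, ?_⟩
    rw [eval_pbigConj]
    intro x hx
    obtain ⟨ψ, hψ, rfl⟩ := List.mem_map.1 hx
    have hψΦ : ψ ∈ Φ := Finset.mem_toList.1 hψ
    by_cases hv : v ψ
    · simp [Finset.mem_filter, hψΦ, hv]
    · simp [Finset.mem_filter, hψΦ, hv]
  · rw [inst_pbigDisj, List.map_map]
    unfold bigDisj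
    congr 1
    apply List.map_congr_left
    intro s hs
    show PropF.inst id (pbigConj _) = atomF Φ s
    rw [inst_pbigConj, List.map_map]
    unfold atomF bigConj
    congr 1
    apply List.map_congr_left
    intro ψ hψ
    show PropF.inst id (if ψ ∈ s then .pv ψ else pneg (.pv ψ)) = litOf s ψ
    unfold litOf
    split <;> rfl

theorem cover_atoms (Φ : Finset (MFml A P)) :
    Pf (bigDisj ((Finset.univ : Finset (Atom Φ)).toList.map (fun X => atomF Φ X.1))) := by
  refine pf_mp (disj_elim ?_) (cover_all Φ)
  intro ψ hψ
  obtain ⟨s, hs, rfl⟩ := List.mem_map.1 hψ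
  by_cases hcon : Con (atomF Φ s)
  · exact disj_mem (List.mem_map.2 ⟨⟨s, Finset.mem_powerset.1 (Finset.mem_toList.1 hs), hcon⟩,
      Finset.mem_toList.2 (Finset.mem_univ _), rfl⟩)
  · exact pf_imp_of_neg _ (not_not.mp hcon)

end PDLC

namespace PDLC

variable {A P : Type}

/-! Fischer–Ladner closure -/

mutual
noncomputable def FLf : MFml A P → Finset (MFml A P)
  | .pv p => {.pv p}
  | .fls => {.fls}
  | .imp a b => insert (.imp a b) (FLf a ∪ FLf b)
  | .box e χ => FLt e χ ∪ FLf χ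
noncomputable def FLt : MTrm A P → MFml A P → Finset (MFml A P)
  | .tv a, χ => {.box (.tv a) χ}
  | .comp e f, χ => insert (.box (.comp e f) χ) (FLt e (.box f χ) ∪ FLt f χ)
  | .union e f, χ => insert (.box (.union e f) χ) (FLt e χ ∪ FLt f χ)
  | .plus e, χ => insert (.box (.plus e) χ) (FLt e (.box (.plus e) χ) ∪ FLt e χ)
  | .testL ψ e, χ => insert (.box (.testL ψ e) χ) (FLf ψ ∪ FLt e χ)
  | .testR e ψ, χ => insert (.box (.testR e ψ) χ)
      (insert (.imp ψ χ) (FLt e (.imp ψ χ) ∪ FLf ψ))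
end

theorem FLf_pv (p : P) : FLf (.pv p : MFml A P) = {.pv p} := by rw [FLf]
theorem FLf_fls : FLf (.fls : MFml A P) = {.fls} := by rw [FLf]
theorem FLf_imp (a b : MFml A P) : FLf (.imp a b) = insert (.imp a b) (FLf a ∪ FLf b) := by
  rw [FLf]
theorem FLf_box (e : MTrm A P) (χ : MFml A P) : FLf (.box e χ) = FLt e χ ∪ FLf χ := by rw [FLf]
theorem FLt_tv (a : A) (χ : MFml A P) : FLt (.tv a) χ = {MFml.box (.tv a) χ} := by rw [FLt]
theorem FLt_comp (e f : MTrm A P) (χ : MFml A P) :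
    FLt (.comp e f) χ = insert (.box (.comp e f) χ) (FLt e (.box f χ) ∪ FLt f χ) := by rw [FLt]
theorem FLt_union (e f : MTrm A P) (χ : MFml A P) :
    FLt (.union e f) χ = insert (.box (.union e f) χ) (FLt e χ ∪ FLt f χ) := by rw [FLt]
theorem FLt_plus (e : MTrm A P) (χ : MFml A P) :
    FLt (.plus e) χ = insert (.box (.plus e) χ) (FLt e (.box (.plus e) χ) ∪ FLt e χ) := by
  rw [FLt]
theorem FLt_testL (ψ : MFml A P) (e : MTrm A P) (χ : MFml A P) :
    FLt (.testL ψ e) χ = insert (.box (.testL ψ e) χ) (FLf ψ ∪ FLt e χ) := by rw [FLt]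
theorem FLt_testR (e : MTrm A P) (ψ χ : MFml A P) :
    FLt (.testR e ψ) χ = insert (.box (.testR e ψ) χ)
      (insert (.imp ψ χ) (FLt e (.imp ψ χ) ∪ FLf ψ)) := by rw [FLt]

theorem mem_FLt_self (e : MTrm A P) (χ : MFml A P) : MFml.box e χ ∈ FLt e χ := by
  cases e with
  | tv a => rw [FLt_tv]; simp
  | comp e f => rw [FLt_comp]; simp
  | union e f => rw [FLt_union]; simp
  | plus e => rw [FLt_plus]; simp
  | testL ψ e => rw [FLt_testL]; simp
  | testR e ψ => rw [FLt_testR]; simp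

theorem mem_FLf_self (φ : MFml A P) : φ ∈ FLf φ := by
  cases φ with
  | pv p => rw [FLf_pv]; simp
  | fls => rw [FLf_fls]; simp
  | imp a b => rw [FLf_imp]; simp
  | box e χ => rw [FLf_box]; exact Finset.mem_union_left _ (mem_FLt_self e χ)

mutual
theorem FLf_trans : ∀ (φ ψ : MFml A P), ψ ∈ FLf φ → FLf ψ ⊆ FLf φ
  | .pv p, ψ, h => by
      rw [FLf_pv] at h ⊢; simp at h; subst h; rw [FLf_pv]
  | .fls, ψ, h => by
      rw [FLf_fls] at h ⊢; simp at h; subst h; rw [FLf_fls]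
  | .imp a b, ψ, h => by
      rw [FLf_imp] at h ⊢
      rcases Finset.mem_insert.mp h with rfl | h
      · rw [FLf_imp]
      rcases Finset.mem_union.mp h with h | h
      · exact (FLf_trans a ψ h).trans (by intro x hx; simp [hx])
      · exact (FLf_trans b ψ h).trans (by intro x hx; simp [hx])
  | .box e χ, ψ, h => by
      rw [FLf_box] at h ⊢
      rcases Finset.mem_union.mp h with h | h
      · exact FLt_trans e χ ψ h
      · exact (FLf_trans χ ψ h).trans Finset.subset_union_right

theorem FLt_trans : ∀ (e : MTrm A P) (χ ψ : MFml A P), ψ ∈ FLt e χ →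
    FLf ψ ⊆ FLt e χ ∪ FLf χ
  | .tv a, χ, ψ, h => by
      rw [FLt_tv] at h ⊢; simp at h; subst h
      rw [FLf_box, FLt_tv]
  | .comp e f, χ, ψ, h => by
      rw [FLt_comp] at h ⊢
      rcases Finset.mem_insert.mp h with rfl | h
      · rw [FLf_box, FLt_comp]
      rcases Finset.mem_union.mp h with h | h
      · refine (FLt_trans e (.box f χ) ψ h).trans ?_
        rw [FLf_box]
        intro x hx
        rcases Finset.mem_union.mp hx with hx | hx
        · exact Finset.mem_union_left _ (Finset.mem_insert_of_mem (Finset.mem_union_left _ hx))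
        rcases Finset.mem_union.mp hx with hx | hx
        · exact Finset.mem_union_left _ (Finset.mem_insert_of_mem (Finset.mem_union_right _ hx))
        · exact Finset.mem_union_right _ hx
      · refine (FLt_trans f χ ψ h).trans ?_
        intro x hx
        rcases Finset.mem_union.mp hx with hx | hx
        · exact Finset.mem_union_left _ (Finset.mem_insert_of_mem (Finset.mem_union_right _ hx))
        · exact Finset.mem_union_right _ hx
  | .union e f, χ, ψ, h => by
      rw [FLt_union] at h ⊢
      rcases Finset.mem_insert.mp h with rfl | h
      · rw [FLf_box, FLt_union]
      rcases Finset.mem_union.mp h with h | h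
      · refine (FLt_trans e χ ψ h).trans ?_
        intro x hx
        rcases Finset.mem_union.mp hx with hx | hx
        · exact Finset.mem_union_left _ (Finset.mem_insert_of_mem (Finset.mem_union_left _ hx))
        · exact Finset.mem_union_right _ hx
      · refine (FLt_trans f χ ψ h).trans ?_
        intro x hx
        rcases Finset.mem_union.mp hx with hx | hx
        · exact Finset.mem_union_left _ (Finset.mem_insert_of_mem (Finset.mem_union_right _ hx))
        · exact Finset.mem_union_right _ hx
  | .plus e, χ, ψ, h => by
      rw [FLt_plus] at h ⊢
      rcases Finset.mem_insert.mp h with rfl | h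
      · rw [FLf_box, FLt_plus]
      rcases Finset.mem_union.mp h with h | h
      · refine (FLt_trans e (.box (.plus e) χ) ψ h).trans ?_
        rw [FLf_box, FLt_plus]
        intro x hx
        rcases Finset.mem_union.mp hx with hx | hx
        · exact Finset.mem_union_left _ (Finset.mem_insert_of_mem (Finset.mem_union_left _ hx))
        rcases Finset.mem_union.mp hx with hx | hx
        · exact Finset.mem_union_left _ hx
        · exact Finset.mem_union_right _ hx
      · refine (FLt_trans e χ ψ h).trans ?_
        intro x hx
        rcases Finset.mem_union.mp hx with hx | hx
        · exact Finset.mem_union_left _ (Finset.mem_insert_of_mem (Finset.mem_union_right _ hx))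
        · exact Finset.mem_union_right _ hx
  | .testL ψ0 e, χ, ψ, h => by
      rw [FLt_testL] at h ⊢
      rcases Finset.mem_insert.mp h with rfl | h
      · rw [FLf_box, FLt_testL]
      rcases Finset.mem_union.mp h with h | h
      · refine (FLf_trans ψ0 ψ h).trans ?_
        intro x hx
        exact Finset.mem_union_left _ (Finset.mem_insert_of_mem (Finset.mem_union_left _ hx))
      · refine (FLt_trans e χ ψ h).trans ?_
        intro x hx
        rcases Finset.mem_union.mp hx with hx | hx
        · exact Finset.mem_union_left _ (Finset.mem_insert_of_mem (Finset.mem_union_right _ hx))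
        · exact Finset.mem_union_right _ hx
  | .testR e ψ0, χ, ψ, h => by
      rw [FLt_testR] at h ⊢
      have himp : FLf (MFml.imp ψ0 χ) ⊆
          insert (MFml.box (.testR e ψ0) χ)
            (insert (MFml.imp ψ0 χ) (FLt e (.imp ψ0 χ) ∪ FLf ψ0)) ∪ FLf χ := by
        rw [FLf_imp]
        intro x hx
        rcases Finset.mem_insert.mp hx with rfl | hx
        · exact Finset.mem_union_left _ (Finset.mem_insert_of_mem (Finset.mem_insert_self _ _))
        rcases Finset.mem_union.mp hx with hx | hx
        · exact Finset.mem_union_left _ (Finset.mem_insert_of_mem (Finset.mem_insert_of_mem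
            (Finset.mem_union_right _ hx)))
        · exact Finset.mem_union_right _ hx
      rcases Finset.mem_insert.mp h with rfl | h
      · rw [FLf_box, FLt_testR]
      rcases Finset.mem_insert.mp h with rfl | h
      · exact himp
      rcases Finset.mem_union.mp h with h | h
      · refine (FLt_trans e (.imp ψ0 χ) ψ h).trans ?_
        intro x hx
        rcases Finset.mem_union.mp hx with hx | hx
        · exact Finset.mem_union_left _ (Finset.mem_insert_of_mem (Finset.mem_insert_of_mem
            (Finset.mem_union_left _ hx)))
        · exact himp hx
      · refine (FLf_trans ψ0 ψ h).trans ?_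
        intro x hx
        exact Finset.mem_union_left _ (Finset.mem_insert_of_mem (Finset.mem_insert_of_mem
          (Finset.mem_union_right _ hx)))
end

/-! closure properties -/

structure ClosedSet (Φ : Finset (MFml A P)) : Prop where
  impC : ∀ {φ ψ : MFml A P}, MFml.imp φ ψ ∈ Φ → φ ∈ Φ ∧ ψ ∈ Φ
  boxC : ∀ {e : MTrm A P} {χ : MFml A P}, MFml.box e χ ∈ Φ → χ ∈ Φ
  compC : ∀ {e f : MTrm A P} {χ : MFml A P}, MFml.box (.comp e f) χ ∈ Φ →
    MFml.box e (.box f χ) ∈ Φ ∧ MFml.box f χ ∈ Φ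
  unionC : ∀ {e f : MTrm A P} {χ : MFml A P}, MFml.box (.union e f) χ ∈ Φ →
    MFml.box e χ ∈ Φ ∧ MFml.box f χ ∈ Φ
  plusC : ∀ {e : MTrm A P} {χ : MFml A P}, MFml.box (.plus e) χ ∈ Φ →
    MFml.box e χ ∈ Φ ∧ MFml.box e (.box (.plus e) χ) ∈ Φ
  testLC : ∀ {ψ : MFml A P} {e : MTrm A P} {χ : MFml A P}, MFml.box (.testL ψ e) χ ∈ Φ →
    ψ ∈ Φ ∧ MFml.box e χ ∈ Φ
  testRC : ∀ {e : MTrm A P} {ψ χ : MFml A P}, MFml.box (.testR e ψ) χ ∈ Φ →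
    MFml.box e (.imp ψ χ) ∈ Φ ∧ MFml.imp ψ χ ∈ Φ

theorem FLf_closed (φ0 : MFml A P) : ClosedSet (FLf φ0) := by
  have key : ∀ ψ ∈ FLf φ0, FLf ψ ⊆ FLf φ0 := fun ψ h => FLf_trans φ0 ψ h
  constructor
  · intro φ ψ h
    have hsub := key _ h
    rw [FLf_imp] at hsub
    constructor
    · exact hsub (Finset.mem_insert_of_mem (Finset.mem_union_left _ (mem_FLf_self φ)))
    · exact hsub (Finset.mem_insert_of_mem (Finset.mem_union_right _ (mem_FLf_self ψ)))
  · intro e χ h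
    have hsub := key _ h
    rw [FLf_box] at hsub
    exact hsub (Finset.mem_union_right _ (mem_FLf_self χ))
  · intro e f χ h
    have hsub := key _ h
    rw [FLf_box, FLt_comp] at hsub
    constructor
    · exact hsub (Finset.mem_union_left _ (Finset.mem_insert_of_mem
        (Finset.mem_union_left _ (mem_FLt_self e (.box f χ)))))
    · exact hsub (Finset.mem_union_left _ (Finset.mem_insert_of_mem
        (Finset.mem_union_right _ (mem_FLt_self f χ))))
  · intro e f χ h
    have hsub := key _ h
    rw [FLf_box, FLt_union] at hsub
    constructor
    · exact hsub (Finset.mem_union_left _ (Finset.mem_insert_of_mem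
        (Finset.mem_union_left _ (mem_FLt_self e χ))))
    · exact hsub (Finset.mem_union_left _ (Finset.mem_insert_of_mem
        (Finset.mem_union_right _ (mem_FLt_self f χ))))
  · intro e χ h
    have hsub := key _ h
    rw [FLf_box, FLt_plus] at hsub
    constructor
    · exact hsub (Finset.mem_union_left _ (Finset.mem_insert_of_mem
        (Finset.mem_union_right _ (mem_FLt_self e χ))))
    · exact hsub (Finset.mem_union_left _ (Finset.mem_insert_of_mem
        (Finset.mem_union_left _ (mem_FLt_self e (.box (.plus e) χ)))))
  · intro ψ e χ h
    have hsub := key _ h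
    rw [FLf_box, FLt_testL] at hsub
    constructor
    · exact hsub (Finset.mem_union_left _ (Finset.mem_insert_of_mem
        (Finset.mem_union_left _ (mem_FLf_self ψ))))
    · exact hsub (Finset.mem_union_left _ (Finset.mem_insert_of_mem
        (Finset.mem_union_right _ (mem_FLt_self e χ))))
  · intro e ψ χ h
    have hsub := key _ h
    rw [FLf_box, FLt_testR] at hsub
    constructor
    · exact hsub (Finset.mem_union_left _ (Finset.mem_insert_of_mem (Finset.mem_insert_of_mem
        (Finset.mem_union_left _ (mem_FLt_self e (.imp ψ χ))))))
    · exact hsub (Finset.mem_union_left _ (Finset.mem_insert_of_mem (Finset.mem_insert_self _ _)))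

end PDLC

namespace PDLC

variable {A P : Type}

attribute [local instance 50] Classical.propDecidable

theorem pf_clash {b c g : MFml A P} (h : Pf (c.imp b.neg)) : Pf (b.imp (c.imp g)) :=
  pf_mp (taut' (.imp (.imp (.pv c) (pneg (.pv b))) (.imp (.pv b) (.imp (.pv c) (.pv g))))
    (by intro v; simp; tauto) rfl) h

theorem pf_dni (a : MFml A P) : Pf (a.imp a.neg.neg) :=
  taut' (.imp (.pv a) (pneg (pneg (.pv a)))) (by intro v; simp) rfl

/-! the canonical model -/

noncomputable def canon (Φ : Finset (MFml A P)) : GStruct A P (Atom Φ) where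
  U := fun _ _ => True
  rel := fun a X Y => Con ((atomF Φ X.1).and (MFml.dia (.tv a) (atomF Φ Y.1)))
  rel_sub := fun _ _ _ _ => trivial
  val := fun p X => MFml.pv p ∈ X.1

noncomputable def succL (Φ : Finset (MFml A P)) (e : MTrm A P) (X : Atom Φ) :
    List (MFml A P) :=
  ((Finset.univ.filter fun Y : Atom Φ => msemT (canon Φ) e X Y).toList).map
    (fun Y => atomF Φ Y.1)

noncomputable def succD (Φ : Finset (MFml A P)) (e : MTrm A P) (X : Atom Φ) : MFml A P :=
  bigDisj (succL Φ e X)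

theorem mem_succL {Φ : Finset (MFml A P)} {e : MTrm A P} {X Y : Atom Φ}
    (h : msemT (canon Φ) e X Y) : atomF Φ Y.1 ∈ succL Φ e X :=
  List.mem_map.2 ⟨Y, Finset.mem_toList.2 (Finset.mem_filter.2 ⟨Finset.mem_univ _, h⟩), rfl⟩

theorem succL_spec {Φ : Finset (MFml A P)} {e : MTrm A P} {X : Atom Φ} {ψ : MFml A P}
    (h : ψ ∈ succL Φ e X) : ∃ Y : Atom Φ, msemT (canon Φ) e X Y ∧ ψ = atomF Φ Y.1 := by
  obtain ⟨Y, hY, rfl⟩ := List.mem_map.1 h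
  exact ⟨Y, (Finset.mem_filter.1 (Finset.mem_toList.1 hY)).2, rfl⟩

/-! the cover lemma for atomic terms -/

theorem cover_tv (Φ : Finset (MFml A P)) (a : A) (X : Atom Φ) :
    Pf ((atomF Φ X.1).imp (.box (.tv a) (succD Φ (.tv a) X))) := by
  set Dall := bigDisj ((Finset.univ : Finset (Atom Φ)).toList.map (fun Y => atomF Φ Y.1)) with hD
  have hall : Pf ((atomF Φ X.1).imp (.box (.tv a) Dall)) :=
    pf_weak _ (MProofNL.nec _ (cover_atoms Φ))
  set badL := ((Finset.univ.filter fun Y : Atom Φ =>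
      ¬ msemT (canon Φ) (.tv a) X Y).toList).map (fun Y => (atomF Φ Y.1).neg) with hbadL
  have hbad : Pf ((atomF Φ X.1).imp (.box (.tv a) (bigConj badL))) := by
    apply boxCollect
    intro ψ hψ
    rw [hbadL] at hψ
    obtain ⟨Y, hY, rfl⟩ := List.mem_map.1 hψ
    have hnc : ¬ Con ((atomF Φ X.1).and (MFml.dia (.tv a) (atomF Φ Y.1))) :=
      (Finset.mem_filter.1 (Finset.mem_toList.1 hY)).2
    have hpf : Pf (((atomF Φ X.1).and (MFml.dia (.tv a) (atomF Φ Y.1))).neg) := not_not.mp hnc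
    exact pf_notand hpf
  have hglue : Pf (Dall.imp ((bigConj badL).imp (succD Φ (.tv a) X))) := by
    apply disj_elim
    intro ψ hψ
    obtain ⟨Y, hY, rfl⟩ := List.mem_map.1 hψ
    by_cases hr : msemT (canon Φ) (.tv a) X Y
    · exact pf_imp_inner_weak _ (disj_mem (mem_succL hr))
    · refine pf_clash (conj_mem ?_)
      rw [hbadL]
      exact List.mem_map.2 ⟨Y, Finset.mem_toList.2 (Finset.mem_filter.2
        ⟨Finset.mem_univ _, hr⟩), rfl⟩
  exact boxMP2 _ hglue hall hbad

/-! truth lemma and program lemmas, by mutual induction -/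

mutual

theorem TL : ∀ (φ : MFml A P) (Φ : Finset (MFml A P)), ClosedSet Φ → φ ∈ Φ →
    ∀ X : Atom Φ, msemF (canon Φ) φ X ↔ φ ∈ X.1
  | .pv p, Φ, _, _, X => by
      rw [msemF_pv]; exact Iff.rfl
  | .fls, Φ, _, _, X => by
      rw [msemF_fls]
      constructor
      · intro h; exact h.elim
      · intro h; exact (X.2.2 (amem_imp X h)).elim
  | .imp a b, Φ, hC, hφ, X => by
      have haΦ := (hC.impC hφ).1
      have hbΦ := (hC.impC hφ).2
      rw [msemF_imp, TL a Φ hC haΦ X, TL b Φ hC hbΦ X]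
      constructor
      · intro h
        by_cases ha : a ∈ X.1
        · exact mem_of_prov X hφ (pf_imp_inner_weak a (amem_imp X (h ha)))
        · exact mem_of_prov X hφ (pf_efq_imp (notmem_imp haΦ ha))
      · intro h ha
        exact mem_of_prov X hbΦ (pf_imp_mp (amem_imp X h) (amem_imp X ha))
  | .box e χ, Φ, hC, hφ, X => by
      have hχΦ := hC.boxC hφ
      rw [msemF_box]
      constructor
      · intro h
        have h1 := P2 e Φ hC χ hφ X
        have h2 : Pf ((succD Φ e X).imp χ) := by
          apply disj_elim
          intro ψ hψ
          obtain ⟨Y, hY, rfl⟩ := succL_spec hψ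
          exact amem_imp Y ((TL χ Φ hC hχΦ Y).mp (h Y hY))
        exact mem_of_prov X hφ (pf_trans h1 (boxMono e h2))
      · intro h Y hY
        exact (TL χ Φ hC hχΦ Y).mpr (P1 e Φ hC χ X Y hφ h hY)

theorem P1 : ∀ (e : MTrm A P) (Φ : Finset (MFml A P)), ClosedSet Φ →
    ∀ (χ : MFml A P) (X Y : Atom Φ), MFml.box e χ ∈ Φ → MFml.box e χ ∈ X.1 →
      msemT (canon Φ) e X Y → χ ∈ Y.1
  | .tv a, Φ, hC, χ, X, Y, hΦ, hX, hsem => by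
      have hχΦ := hC.boxC hΦ
      by_contra hχY
      have hrel : Con ((atomF Φ X.1).and (MFml.dia (.tv a) (atomF Φ Y.1))) :=
        (msemT_tv (canon Φ) a X Y).mp hsem
      have h1 : Pf ((atomF Φ X.1).imp (.box (.tv a) χ)) := amem_imp X hX
      have h2 : Pf (χ.imp (atomF Φ Y.1).neg) :=
        pf_trans (pf_dni χ) (pf_contrapose (notmem_imp hχΦ hχY))
      have h3 : Pf ((MFml.box (.tv a) χ).imp (.box (.tv a) (atomF Φ Y.1).neg)) := boxMono _ h2
      exact hrel (pf_notand2 h1 h3)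
  | .comp e f, Φ, hC, χ, X, Y, hΦ, hX, hsem => by
      have hΦ1 := (hC.compC hΦ).1
      have hΦ2 := (hC.compC hΦ).2
      obtain ⟨Z, h1, h2⟩ := (msemT_comp (canon Φ) e f X Y).mp hsem
      have hX1 : MFml.box e (.box f χ) ∈ X.1 :=
        mem_of_mem_prov X hX (pf_iff_l (MProofNL.compAx e f χ)) hΦ1
      have hZ : MFml.box f χ ∈ Z.1 := P1 e Φ hC (.box f χ) X Z hΦ1 hX1 h1
      exact P1 f Φ hC χ Z Y hΦ2 hZ h2
  | .union e f, Φ, hC, χ, X, Y, hΦ, hX, hsem => by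
      have hΦ1 := (hC.unionC hΦ).1
      have hΦ2 := (hC.unionC hΦ).2
      rcases (msemT_union (canon Φ) e f X Y).mp hsem with h | h
      · have hX1 : MFml.box e χ ∈ X.1 := mem_of_mem_prov X hX
          (pf_trans (pf_iff_l (MProofNL.unionAx e f χ)) (pf_and_l _ _)) hΦ1
        exact P1 e Φ hC χ X Y hΦ1 hX1 h
      · have hX2 : MFml.box f χ ∈ X.1 := mem_of_mem_prov X hX
          (pf_trans (pf_iff_l (MProofNL.unionAx e f χ)) (pf_and_r _ _)) hΦ2
        exact P1 f Φ hC χ X Y hΦ2 hX2 h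
  | .plus e, Φ, hC, χ, X, Y, hΦ, hX, hsem => by
      have hΦ1 := (hC.plusC hΦ).1
      have hΦ2 := (hC.plusC hΦ).2
      have step : ∀ (U V : Atom Φ), MFml.box (.plus e) χ ∈ U.1 → msemT (canon Φ) e U V →
          χ ∈ V.1 ∧ MFml.box (.plus e) χ ∈ V.1 := by
        intro U V hU hUV
        have h1 : MFml.box e χ ∈ U.1 := mem_of_mem_prov U hU
          (pf_trans (pf_iff_l (MProofNL.plusAx e χ)) (pf_and_l _ _)) hΦ1
        have h2 : MFml.box e (.box (.plus e) χ) ∈ U.1 := mem_of_mem_prov U hU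
          (pf_trans (pf_iff_l (MProofNL.plusAx e χ)) (pf_and_r _ _)) hΦ2
        exact ⟨P1 e Φ hC χ U V hΦ1 h1 hUV, P1 e Φ hC (.box (.plus e) χ) U V hΦ2 h2 hUV⟩
      have hsem' := (msemT_plus (canon Φ) e X Y).mp hsem
      clear hsem
      have aux : χ ∈ Y.1 ∧ MFml.box (.plus e) χ ∈ Y.1 := by
        induction hsem' with
        | single h => exact step X _ hX h
        | tail _ hbc ih => exact step _ _ ih.2 hbc
      exact aux.1
  | .testL ψ e, Φ, hC, χ, X, Y, hΦ, hX, hsem => by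
      have hψΦ := (hC.testLC hΦ).1
      have hΦe := (hC.testLC hΦ).2
      obtain ⟨hψsem, hE⟩ := (msemT_testL (canon Φ) ψ e X Y).mp hsem
      have hψmem : ψ ∈ X.1 := (TL ψ Φ hC hψΦ X).mp hψsem
      have hXe : Pf ((atomF Φ X.1).imp (.box e χ)) :=
        pf_imp_mp (pf_trans (amem_imp X hX) (pf_iff_l (MProofNL.testLAx ψ e χ)))
          (amem_imp X hψmem)
      exact P1 e Φ hC χ X Y hΦe (mem_of_prov X hΦe hXe) hE
  | .testR e ψ, Φ, hC, χ, X, Y, hΦ, hX, hsem => by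
      have hΦ1 := (hC.testRC hΦ).1
      have hΦ2 := (hC.testRC hΦ).2
      have hψΦ := (hC.impC hΦ2).1
      have hχΦ := (hC.impC hΦ2).2
      obtain ⟨hE, hψsem⟩ := (msemT_testR (canon Φ) e ψ X Y).mp hsem
      have hX1 : MFml.box e (.imp ψ χ) ∈ X.1 :=
        mem_of_mem_prov X hX (pf_iff_l (MProofNL.testRAx e ψ χ)) hΦ1
      have hY1 : MFml.imp ψ χ ∈ Y.1 := P1 e Φ hC (.imp ψ χ) X Y hΦ1 hX1 hE
      have hψY : ψ ∈ Y.1 := (TL ψ Φ hC hψΦ Y).mp hψsem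
      exact mem_of_prov Y hχΦ (pf_imp_mp (amem_imp Y hY1) (amem_imp Y hψY))

theorem P2 : ∀ (e : MTrm A P) (Φ : Finset (MFml A P)), ClosedSet Φ →
    ∀ (χ : MFml A P), MFml.box e χ ∈ Φ →
      ∀ X : Atom Φ, Pf ((atomF Φ X.1).imp (.box e (succD Φ e X)))
  | .tv a, Φ, hC, χ, hΦ, X => cover_tv Φ a X
  | .comp e f, Φ, hC, χ, hΦ, X => by
      have hΦ1 := (hC.compC hΦ).1
      have hΦ2 := (hC.compC hΦ).2
      have h1 := P2 e Φ hC (.box f χ) hΦ1 X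
      have hstep : Pf ((succD Φ e X).imp (.box f (succD Φ (.comp e f) X))) := by
        apply disj_elim
        intro ψ hψ
        obtain ⟨Z, hZ, rfl⟩ := succL_spec hψ
        refine pf_trans (P2 f Φ hC χ hΦ2 Z) (boxMono f (disj_elim ?_))
        intro ψ' hψ'
        obtain ⟨Y, hY, rfl⟩ := succL_spec hψ'
        exact disj_mem (mem_succL ((msemT_comp (canon Φ) e f X Y).mpr ⟨Z, hZ, hY⟩))
      exact pf_trans (pf_trans h1 (boxMono e hstep))
        (pf_iff_r (MProofNL.compAx e f (succD Φ (.comp e f) X)))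
  | .union e f, Φ, hC, χ, hΦ, X => by
      have hΦ1 := (hC.unionC hΦ).1
      have hΦ2 := (hC.unionC hΦ).2
      have he : Pf ((atomF Φ X.1).imp (.box e (succD Φ (.union e f) X))) := by
        refine pf_trans (P2 e Φ hC χ hΦ1 X) (boxMono e (disj_elim ?_))
        intro ψ hψ
        obtain ⟨Y, hY, rfl⟩ := succL_spec hψ
        exact disj_mem (mem_succL ((msemT_union (canon Φ) e f X Y).mpr (Or.inl hY)))
      have hf : Pf ((atomF Φ X.1).imp (.box f (succD Φ (.union e f) X))) := by
        refine pf_trans (P2 f Φ hC χ hΦ2 X) (boxMono f (disj_elim ?_))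
        intro ψ hψ
        obtain ⟨Y, hY, rfl⟩ := succL_spec hψ
        exact disj_mem (mem_succL ((msemT_union (canon Φ) e f X Y).mpr (Or.inr hY)))
      exact pf_trans (pf_and_intro he hf)
        (pf_iff_r (MProofNL.unionAx e f (succD Φ (.union e f) X)))
  | .plus e, Φ, hC, χ, hΦ, X => by
      have hΦ1 := (hC.plusC hΦ).1
      have key : ∀ Z : Atom Φ,
          (Z = X ∨ Relation.TransGen (fun u v => msemT (canon Φ) e u v) X Z) →
          Pf ((atomF Φ Z.1).imp (.box e (succD Φ (.plus e) X))) := by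
        intro Z hZ
        refine pf_trans (P2 e Φ hC χ hΦ1 Z) (boxMono e (disj_elim ?_))
        intro ψ hψ
        obtain ⟨Y, hY, rfl⟩ := succL_spec hψ
        refine disj_mem (mem_succL ?_)
        rw [msemT_plus]
        rcases hZ with rfl | hZ
        · exact Relation.TransGen.single hY
        · exact hZ.tail hY
      have hA := key X (Or.inl rfl)
      have hT : Pf ((succD Φ (.plus e) X).imp (.box e (succD Φ (.plus e) X))) := by
        apply disj_elim
        intro ψ hψ
        obtain ⟨Z, hZ, rfl⟩ := succL_spec hψ
        exact key Z (Or.inr ((msemT_plus (canon Φ) e X Z).mp hZ))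
      exact pf_trans (pf_and_intro hA (pf_weak _ (MProofNL.nec (.plus e) hT)))
        (MProofNL.plusInd e (succD Φ (.plus e) X))
  | .testL ψ e, Φ, hC, χ, hΦ, X => by
      have hψΦ := (hC.testLC hΦ).1
      have hΦe := (hC.testLC hΦ).2
      by_cases hsat : msemF (canon Φ) ψ X
      · have h2 : Pf ((succD Φ e X).imp (succD Φ (.testL ψ e) X)) := by
          apply disj_elim
          intro ψ' hψ'
          obtain ⟨Y, hY, rfl⟩ := succL_spec hψ'
          exact disj_mem (mem_succL ((msemT_testL (canon Φ) ψ e X Y).mpr ⟨hsat, hY⟩))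
        have h4 : Pf ((atomF Φ X.1).imp (ψ.imp (.box e (succD Φ (.testL ψ e) X)))) :=
          pf_imp_inner_weak ψ (pf_trans (P2 e Φ hC χ hΦe X) (boxMono e h2))
        exact pf_trans h4 (pf_iff_r (MProofNL.testLAx ψ e (succD Φ (.testL ψ e) X)))
      · have hψX : ψ ∉ X.1 := fun hmem => hsat ((TL ψ Φ hC hψΦ X).mpr hmem)
        have h4 : Pf ((atomF Φ X.1).imp (ψ.imp (.box e (succD Φ (.testL ψ e) X)))) :=
          pf_efq_imp (notmem_imp hψΦ hψX)
        exact pf_trans h4 (pf_iff_r (MProofNL.testLAx ψ e (succD Φ (.testL ψ e) X)))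
  | .testR e ψ, Φ, hC, χ, hΦ, X => by
      have hΦ1 := (hC.testRC hΦ).1
      have hΦ2 := (hC.testRC hΦ).2
      have hψΦ := (hC.impC hΦ2).1
      have h2 : Pf ((succD Φ e X).imp (ψ.imp (succD Φ (.testR e ψ) X))) := by
        apply disj_elim
        intro ψ' hψ'
        obtain ⟨Z, hZ, rfl⟩ := succL_spec hψ'
        by_cases hsat : msemF (canon Φ) ψ Z
        · exact pf_imp_inner_weak ψ
            (disj_mem (mem_succL ((msemT_testR (canon Φ) e ψ X Z).mpr ⟨hZ, hsat⟩)))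
        · have : ψ ∉ Z.1 := fun hm => hsat ((TL ψ Φ hC hψΦ Z).mpr hm)
          exact pf_efq_imp (notmem_imp hψΦ this)
      have h3 : Pf ((atomF Φ X.1).imp (.box e (ψ.imp (succD Φ (.testR e ψ) X)))) :=
        pf_trans (P2 e Φ hC (.imp ψ χ) hΦ1 X) (boxMono e h2)
      exact pf_trans h3 (pf_iff_r (MProofNL.testRAx e ψ (succD Φ (.testR e ψ) X)))

end

end PDLC

namespace PDLC

variable {A P : Type}

theorem transGen_decomp {α : Type*} {r : α → α → Prop} {a b : α}
    (h : Relation.TransGen r a b) :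
    r a b ∨ ∃ c, r a c ∧ Relation.TransGen r c b := by
  induction h with
  | single h => exact Or.inl h
  | tail hab hbc ih =>
      rcases ih with h | ⟨c, hc, hcb⟩
      · exact Or.inr ⟨_, h, .single hbc⟩
      · exact Or.inr ⟨c, hc, hcb.tail hbc⟩

theorem inst_sem {W : Type} (S : GStruct A P W) {V : Type} (σ : V → MFml A P) (x : W) :
    ∀ (χ : PropF V), msemF S (PropF.inst σ χ) x ↔ PropF.eval (fun p => msemF S (σ p) x) χ
  | .pv p => Iff.rfl
  | .imp a b => by
      show msemF S (.imp (PropF.inst σ a) (PropF.inst σ b)) x ↔ _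
      rw [msemF_imp, inst_sem S σ x a, inst_sem S σ x b]
      exact Iff.rfl
  | .fls => by
      show msemF S .fls x ↔ _
      rw [msemF_fls]
      exact Iff.rfl.symm.trans (by simp [PropF.eval])

theorem soundness {φ : MFml A P} (h : MProofNL φ) :
    ∀ (W : Type) (S : GStruct A P W) (x : W), msemF S φ x := by
  induction h with
  | mp h1 h2 ih1 ih2 =>
      intro W S x
      have := ih2 W S x
      rw [msemF_imp] at this
      exact this (ih1 W S x)
  | nec e h ih =>
      intro W S x
      rw [msemF_box]
      intro y _
      exact ih W S y
  | prop χ hval σ =>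
      intro W S x
      rw [inst_sem]
      exact hval _
  | compAx e f ψ =>
      intro W S x
      rw [msemF_iff]
      constructor
      · intro h
        rw [msemF_box] at h ⊢
        intro y hy
        rw [msemF_box]
        intro z hz
        exact h z ((msemT_comp S e f x z).mpr ⟨y, hy, hz⟩)
      · intro h
        rw [msemF_box] at h ⊢
        intro z hz
        obtain ⟨y, hy, hz2⟩ := (msemT_comp S e f x z).mp hz
        have := h y hy
        rw [msemF_box] at this
        exact this z hz2
  | unionAx e f ψ =>
      intro W S x
      simp only [msemF_iff, msemF_and, msemF_box, msemT_union]
      constructor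
      · intro h
        exact ⟨fun y hy => h y (Or.inl hy), fun y hy => h y (Or.inr hy)⟩
      · rintro ⟨h1, h2⟩ y (hy | hy)
        · exact h1 y hy
        · exact h2 y hy
  | plusAx e ψ =>
      intro W S x
      simp only [msemF_iff, msemF_and, msemF_box, msemT_plus]
      constructor
      · intro h
        exact ⟨fun y hy => h y (.single hy),
          fun y hy z hz => h z ((Relation.TransGen.single hy).trans hz)⟩
      · rintro ⟨h1, h2⟩ y hy
        rcases transGen_decomp hy with h | ⟨c, hc, hcy⟩
        · exact h1 y h
        · exact h2 c hc y hcy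
  | plusInd e ψ =>
      intro W S x
      simp only [msemF_imp, msemF_and, msemF_box, msemT_plus]
      rintro ⟨h1, h2⟩ y hy
      induction hy with
      | single h => exact h1 _ h
      | tail hxb hbc ih => exact h2 _ hxb ih _ hbc
  | testLAx ψ0 e ψ =>
      intro W S x
      simp only [msemF_iff, msemF_imp, msemF_box, msemT_testL]
      constructor
      · intro h hψ0 y hy
        exact h y ⟨hψ0, hy⟩
      · rintro h y ⟨hψ0, hy⟩
        exact h hψ0 y hy
  | testRAx e ψ0 ψ =>
      intro W S x
      simp only [msemF_iff, msemF_imp, msemF_box, msemT_testR]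
      constructor
      · intro h y hy hψ0
        exact h y ⟨hy, hψ0⟩
      · rintro h y ⟨hy, hψ0⟩
        exact h y hy hψ0
  | kAx e ψ1 ψ2 =>
      intro W S x
      simp only [msemF_imp, msemF_box]
      intro h1 h2 y hy
      exact h1 y hy (h2 y hy)

end PDLC


theorem identity_free_pdl_completeness_rel {A P : Type} (φ : MFml A P) :
    (∀ (W : Type) (S : GStruct A P W), Nonempty W → (∀ x y : W, S.U x y) →
      ∀ x : W, msemF S φ x) ↔ MProofNL φ := by
  constructor
  · intro hval
    by_contra hnp
    have hcon : PDLC.Con (MFml.neg φ) := fun hnn => hnp (PDLC.pf_dne hnn)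
    obtain ⟨s, hsub, hconj⟩ :=
      PDLC.extend _ hcon (PDLC.FLf φ).toList (Finset.nodup_toList _)
    rw [Finset.toList_toFinset] at hsub
    set Φ := PDLC.FLf φ with hΦdef
    have hconA : PDLC.Con (PDLC.atomF Φ s) := by
      refine PDLC.conMono (PDLC.conj_intro ?_) hconj
      intro ψ hψ
      exact PDLC.conj_mem (List.mem_cons_of_mem _ hψ)
    have hφΦ : φ ∈ Φ := PDLC.mem_FLf_self φ
    have hφs : φ ∉ s := by
      intro hmem
      apply hconj
      refine PDLC.pf_con_intro (b := φ) ?_ ?_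
      · exact PDLC.conj_mem (List.mem_cons_of_mem _
          (List.mem_map.2 ⟨φ, Finset.mem_toList.2 hφΦ, by simp [PDLC.litOf, hmem]⟩))
      · exact PDLC.conj_mem List.mem_cons_self
    let X0 : PDLC.Atom Φ := ⟨s, hsub, hconA⟩
    have hv := hval (PDLC.Atom Φ) (PDLC.canon Φ) ⟨X0⟩ (fun _ _ => trivial) X0
    exact hφs ((PDLC.TL φ Φ (PDLC.FLf_closed φ) hφΦ X0).mp hv)
  · intro h W S _ _ x
    exact PDLC.soundness h W S x
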